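/- Let f : [-a,a] → ℝ be continuous, C^2 on [-a,0) ∪ (0,a] with f'' ≠ 0 there. Then for every ε > 0 there exists a continuous g : [-a,a] → ℝ, C^2 on [-a,0) ∪ (0,a], such that g ≥ f, g(0) > f(0), g = f on neighborhoods of -a and a, sup|g - f| ≤ ε, and g'' has no more zeros in [-a,0) ∪ (0,a] than f'' has (in particular g'' ≠ 0 on [-a,0) ∪ (0,a]). -/

import Mathlib

open Set Metric


/-- (Lemma 4.4 of the paper.) Let `f : [-a,a] → ℝ` be continuous, `C²` on
`S = [-a,0) ∪ (0,a]` with `f'' ≠ 0` there.  For every `ε > 0` there is a continuous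
`g : [-a,a] → ℝ`, `C²` on `S`, with `g ≥ f`, `g(0) > f(0)`, `g = f` near `±a`,
`sup |g - f| ≤ ε`, and `g'' ≠ 0` on `S` (so `g''` has no more zeros than `f''`,
which has none on `S`). -/
theorem stmt_4 (a ε : ℝ) (ha : 0 < a) (hε : 0 < ε) (f f' f'' : ℝ → ℝ)
    (hfc : ContinuousOn f (Set.Icc (-a) a))
    (hd1 : ∀ x ∈ Set.Ico (-a) 0 ∪ Set.Ioc 0 a,
      HasDerivWithinAt f (f' x) (Set.Icc (-a) a) x)
    (hd2 : ∀ x ∈ Set.Ico (-a) 0 ∪ Set.Ioc 0 a,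
      HasDerivWithinAt f' (f'' x) (Set.Icc (-a) a) x)
    (hf''c : ContinuousOn f'' (Set.Ico (-a) 0 ∪ Set.Ioc 0 a))
    (hne : ∀ x ∈ Set.Ico (-a) 0 ∪ Set.Ioc 0 a, f'' x ≠ 0) :
    ∃ g g' g'' : ℝ → ℝ,
      ContinuousOn g (Set.Icc (-a) a) ∧
      (∀ x ∈ Set.Ico (-a) 0 ∪ Set.Ioc 0 a,
        HasDerivWithinAt g (g' x) (Set.Icc (-a) a) x) ∧
      (∀ x ∈ Set.Ico (-a) 0 ∪ Set.Ioc 0 a,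
        HasDerivWithinAt g' (g'' x) (Set.Icc (-a) a) x) ∧
      ContinuousOn g'' (Set.Ico (-a) 0 ∪ Set.Ioc 0 a) ∧
      (∀ x ∈ Set.Icc (-a) a, f x ≤ g x) ∧
      f 0 < g 0 ∧
      (∃ δ > (0 : ℝ), ∀ x ∈ Set.Icc (-a) a, (x ≤ -a + δ ∨ a - δ ≤ x) → g x = f x) ∧
      (∀ x ∈ Set.Icc (-a) a, |g x - f x| ≤ ε) ∧
      (∀ x ∈ Set.Ico (-a) 0 ∪ Set.Ioc 0 a, g'' x ≠ 0) := by
  -- bump function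
  set S := Set.Ico (-a) 0 ∪ Set.Ioc 0 a with hS
  set φb : ContDiffBump (0 : ℝ) := ⟨a/4, a/2, by positivity, by linarith⟩ with hφb
  set φ : ℝ → ℝ := ⇑φb with hφ
  have hφC : ContDiff ℝ (↑(⊤:ℕ∞)) φ := φb.contDiff
  have hφd : Differentiable ℝ φ := hφC.differentiable (by simp)
  have hφ'C : ContDiff ℝ (↑(⊤:ℕ∞)) (deriv φ) := (contDiff_infty_iff_deriv.mp hφC).2
  have hφ'd : Differentiable ℝ (deriv φ) := hφ'C.differentiable (by simp)
  have hφ''c : Continuous (deriv (deriv φ)) := (contDiff_infty_iff_deriv.mp hφ'C).2.continuous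
  -- derivatives vanish on the plateau
  have hball1 : ∀ x ∈ Metric.ball (0:ℝ) (a/4), deriv φ x = 0 := by
    intro x hx
    have h1 : φ =ᶠ[nhds x] fun _ => (1:ℝ) := by
      filter_upwards [Metric.isOpen_ball.mem_nhds hx] with y hy
      exact φb.one_of_mem_closedBall (Metric.ball_subset_closedBall hy)
    rw [h1.deriv_eq]; exact deriv_const x 1
  have hcball1 : ∀ x ∈ Metric.closedBall (0:ℝ) (a/4), deriv φ x = 0 := by
    have hcl : Metric.closedBall (0:ℝ) (a/4) = closure (Metric.ball (0:ℝ) (a/4)) :=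
      (closure_ball (0:ℝ) (by positivity : (a/4:ℝ) ≠ 0)).symm
    intro x hx
    rw [hcl] at hx
    exact (Set.EqOn.closure (fun y hy => hball1 y hy) hφ'C.continuous continuous_const) hx
  have hball2 : ∀ x ∈ Metric.ball (0:ℝ) (a/4), deriv (deriv φ) x = 0 := by
    intro x hx
    have h1 : deriv φ =ᶠ[nhds x] fun _ => (0:ℝ) := by
      filter_upwards [Metric.isOpen_ball.mem_nhds hx] with y hy using hball1 y hy
    rw [h1.deriv_eq]; exact deriv_const x 0
  have hcball2 : ∀ x ∈ Metric.closedBall (0:ℝ) (a/4), deriv (deriv φ) x = 0 := by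
    have hcl : Metric.closedBall (0:ℝ) (a/4) = closure (Metric.ball (0:ℝ) (a/4)) :=
      (closure_ball (0:ℝ) (by positivity : (a/4:ℝ) ≠ 0)).symm
    intro x hx
    rw [hcl] at hx
    exact (Set.EqOn.closure (fun y hy => hball2 y hy) hφ''c continuous_const) hx
  -- bound on second derivative of bump
  have hcs : HasCompactSupport φ := φb.hasCompactSupport
  have hcs'' : HasCompactSupport (deriv (deriv φ)) := hcs.deriv.deriv
  obtain ⟨C, hC⟩ : ∃ C, ∀ x, |deriv (deriv φ) x| ≤ C := by
    obtain ⟨C, hC⟩ := (hφ''c.norm.bddAbove_range_of_hasCompactSupport hcs''.norm)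
    exact ⟨C, fun x => hC ⟨x, rfl⟩⟩
  set M : ℝ := max C 0 with hM
  have hM0 : 0 ≤ M := le_max_right _ _
  have hMb : ∀ x, |deriv (deriv φ) x| ≤ M := fun x => (hC x).trans (le_max_left _ _)
  -- min of |f''| on K
  set K : Set ℝ := Set.Icc (-a) (-(a/4)) ∪ Set.Icc (a/4) a with hK
  have hKS : K ⊆ S := by
    rintro x (⟨h1, h2⟩ | ⟨h1, h2⟩)
    · exact Or.inl ⟨h1, by linarith⟩
    · exact Or.inr ⟨by linarith, h2⟩
  have hKc : IsCompact K := (isCompact_Icc).union isCompact_Icc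
  have hKne : K.Nonempty := ⟨a, Or.inr ⟨by linarith, le_refl a⟩⟩
  have habs : ContinuousOn (fun x => |f'' x|) K :=
    (hf''c.mono hKS).abs
  obtain ⟨x₀, hx₀K, hx₀⟩ := hKc.exists_isMinOn hKne habs
  set m : ℝ := |f'' x₀| with hm
  have hm0 : 0 < m := abs_pos.mpr (hne x₀ (hKS hx₀K))
  have hmle : ∀ x ∈ K, m ≤ |f'' x| := fun x hx => hx₀ hx
  -- choose δ
  set δ : ℝ := min ε (m / (M + 1)) with hδ
  have hδ0 : 0 < δ := lt_min hε (by positivity)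
  have hδε : δ ≤ ε := min_le_left _ _
  have hδm : δ * M < m := by
    have h1 : δ ≤ m / (M + 1) := min_le_right _ _
    have h2 : δ * M ≤ m / (M + 1) * M := by
      apply mul_le_mul_of_nonneg_right h1 hM0
    have h3 : m / (M + 1) * M < m := by
      rw [div_mul_eq_mul_div, div_lt_iff₀ (by linarith)]
      nlinarith
    linarith
  -- define g
  refine ⟨fun x => f x + δ * φ x, fun x => f' x + δ * deriv φ x,
    fun x => f'' x + δ * deriv (deriv φ) x, ?_, ?_, ?_, ?_, ?_, ?_, ?_, ?_, ?_⟩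
  · exact hfc.add ((continuous_const.mul hφC.continuous).continuousOn)
  · intro x hx
    exact (hd1 x hx).add (((hφd x).hasDerivAt.const_mul δ).hasDerivWithinAt)
  · intro x hx
    exact (hd2 x hx).add (((hφ'd x).hasDerivAt.const_mul δ).hasDerivWithinAt)
  · exact hf''c.add ((continuous_const.mul hφ''c).continuousOn)
  · intro x hx
    dsimp only
    nlinarith [φb.nonneg (x := x), hδ0.le]
  · have : φ 0 = 1 := φb.one_of_mem_closedBall (by simp [Metric.mem_closedBall]; positivity)
    dsimp only; rw [this]; linarith
  · refine ⟨a/4, by positivity, ?_⟩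
    intro x hx hx'
    have hout : φ x = 0 := by
      apply φb.zero_of_le_dist
      simp only [hφb, dist_zero_right, Real.norm_eq_abs]
      rcases hx' with h | h
      · rw [abs_of_nonpos (by linarith [hx.1])]; linarith
      · rw [abs_of_nonneg (by linarith)]; linarith
    dsimp only; rw [hout]; ring
  · intro x hx
    dsimp only
    have h1 : 0 ≤ δ * φ x := mul_nonneg hδ0.le (φb.nonneg)
    have h2 : δ * φ x ≤ δ := by
      nlinarith [φb.le_one (x := x)]
    rw [show f x + δ * φ x - f x = δ * φ x by ring, abs_of_nonneg h1]
    linarith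
  · intro x hx
    dsimp only
    by_cases hcase : |x| ≤ a/4
    · have : deriv (deriv φ) x = 0 := hcball2 x (by
        simpa [Metric.mem_closedBall, Real.dist_eq] using hcase)
      rw [this, mul_zero, add_zero]
      exact hne x hx
    · push_neg at hcase
      have hxK : x ∈ K := by
        rcases hx with ⟨h1, h2⟩ | ⟨h1, h2⟩
        · left
          constructor
          · exact h1
          · rcases abs_cases x with ⟨he, _⟩ | ⟨he, _⟩ <;> [linarith; linarith]
        · right
          constructor
          · rcases abs_cases x with ⟨he, _⟩ | ⟨he, _⟩ <;> [linarith; linarith]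
          · exact h2
      have h1 : |δ * deriv (deriv φ) x| < m := by
        rw [abs_mul, abs_of_nonneg hδ0.le]
        calc δ * |deriv (deriv φ) x| ≤ δ * M :=
              mul_le_mul_of_nonneg_left (hMb x) hδ0.le
          _ < m := hδm
      have h2 := hmle x hxK
      intro hcontra
      have : f'' x = -(δ * deriv (deriv φ) x) := by linarith
      rw [this, abs_neg] at h2
      linarith
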